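/- arXiv:0704.1865 — 3 statements merged into one kernel-verified Lean document; each statement's English description precedes it below -/
import Mathlib

section
/- For every positive integer n and every real x, the partial sum of the sine series satisfies |∑_{k=1}^{n} (sin kx)/k| ≤ 3√π. -/
open scoped Real
open MeasureTheory Finset Filter

/-- Complex Fourier coefficient of a `2π`-periodic function. -/
noncomputable def fCoef (f : ℝ → ℂ) (k : ℤ) : ℂ :=
  (1 / (2 * π)) * ∫ x in (-π)..π, f x * Complex.exp (-Complex.I * (k : ℂ) * (x : ℂ))

/-- `n`-th symmetric partial sum of the Fourier series. -/
noncomputable def pSum (f : ℝ → ℂ) (n : ℕ) (x : ℝ) : ℂ :=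
  ∑ k ∈ Finset.Icc (-(n : ℤ)) (n : ℤ), fCoef f k * Complex.exp (Complex.I * (k : ℂ) * (x : ℂ))

/-- `L¹` norm over one period. -/
noncomputable def L1 (g : ℝ → ℂ) : ℝ := ∫ x in (-π)..π, ‖g x‖

/-- Mean Value Bounded Variation Sequence (complex sense). -/
def MVBVS (c : ℕ → ℂ) : Prop :=
  (∃ θ : ℝ, 0 ≤ θ ∧ θ < π / 2 ∧ ∀ n, |(c n).arg| ≤ θ) ∧
  ∃ lam : ℝ, 2 ≤ lam ∧ ∃ C : ℝ, 0 < C ∧ ∀ m : ℕ, 1 ≤ m →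
    ∑ k ∈ Finset.Icc m (2 * m), ‖c (k + 1) - c k‖ ≤
      C / m * ∑ k ∈ Finset.Icc ⌊(m : ℝ) / lam⌋₊ ⌊lam * m⌋₊, ‖c k‖


lemma dirichlet_id (x : ℝ) (N : ℕ) :
    2 * Real.sin (x/2) * ∑ k ∈ Icc 1 N, Real.sin (k * x)
      = Real.cos (x/2) - Real.cos ((N + 1/2) * x) := by
  induction N with
  | zero =>
    rw [show (((0:ℕ):ℝ) + 1/2) * x = x/2 by push_cast; ring]
    simp
  | succ N ih =>
    rw [Finset.sum_Icc_succ_top (by omega), mul_add, ih]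
    have key : Real.cos ((N + 1/2) * x) - Real.cos ((N + 1 + 1/2) * x)
        = 2 * Real.sin (x/2) * Real.sin ((N+1) * x) := by
      rw [Real.cos_sub_cos,
        show ((N:ℝ) + 1/2) * x + (N + 1 + 1/2) * x = 2 * (((N:ℝ)+1) * x) by ring,
        show ((N:ℝ) + 1/2) * x - (N + 1 + 1/2) * x = 2 * (-(x/2)) by ring,
        mul_div_cancel_left₀ _ (two_ne_zero), mul_div_cancel_left₀ _ (two_ne_zero),
        Real.sin_neg]
      ring
    push_cast
    linarith

lemma dirichlet_bound {x : ℝ} (hs : 0 < Real.sin (x/2)) (N : ℕ) :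
    |∑ k ∈ Icc 1 N, Real.sin (k * x)| ≤ 1 / Real.sin (x/2) := by
  rw [abs_le]
  have h := dirichlet_id x N
  have h1 := Real.neg_one_le_cos (x/2)
  have h2 := Real.cos_le_one (x/2)
  have h3 := Real.neg_one_le_cos (((N:ℝ) + 1/2) * x)
  have h4 := Real.cos_le_one (((N:ℝ) + 1/2) * x)
  have hone : Real.sin (x/2) * (1 / Real.sin (x/2)) = 1 := mul_one_div_cancel hs.ne'
  constructor
  · nlinarith
  · nlinarith

lemma abel_claim {x B : ℝ} (hB : 0 ≤ B)
    (hD : ∀ N : ℕ, |∑ k ∈ Icc 1 N, Real.sin (k*x)| ≤ B)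
    (m : ℕ) (hm : 1 ≤ m) (n : ℕ) (hn : m + 1 ≤ n) :
    |(∑ k ∈ Icc (m+1) n, Real.sin (k*x)/k) - (∑ k ∈ Icc 1 n, Real.sin (k*x))/n|
      ≤ B/(m+1) + B*(1/(m+1) - 1/n) := by
  induction n, hn using Nat.le_induction with
  | base =>
    rw [Finset.Icc_self, Finset.sum_singleton,
      Finset.sum_Icc_succ_top (by omega : 1 ≤ m + 1)]
    push_cast
    have hm1 : (0:ℝ) < (m:ℝ) + 1 := by positivity
    rw [show Real.sin (((m:ℝ)+1) * x)/((m:ℝ)+1)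
        - ((∑ k ∈ Icc 1 m, Real.sin (k*x)) + Real.sin (((m:ℝ)+1)*x))/((m:ℝ)+1)
        = -((∑ k ∈ Icc 1 m, Real.sin (k*x))/((m:ℝ)+1)) by ring]
    rw [abs_neg, abs_div, abs_of_pos hm1]
    have h := hD m
    have : |∑ k ∈ Icc 1 m, Real.sin (k*x)|/((m:ℝ)+1) ≤ B/((m:ℝ)+1) := by gcongr
    linarith [this]
  | succ n hn ih =>
    have hn0 : ((n:ℝ)) ≠ 0 := by
      have : (1:ℝ) ≤ (n:ℝ) := by exact_mod_cast by omega
      linarith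
    have hn0' : (0:ℝ) < (n:ℝ) := by
      have : (1:ℝ) ≤ (n:ℝ) := by exact_mod_cast by omega
      linarith
    have hn1 : ((n:ℝ)+1) ≠ 0 := by positivity
    rw [Finset.sum_Icc_succ_top (by omega : m+1 ≤ n+1),
      Finset.sum_Icc_succ_top (by omega : 1 ≤ n+1)]
    push_cast
    rw [show (∑ k ∈ Icc (m+1) n, Real.sin (k*x)/k) + Real.sin (((n:ℝ)+1)*x)/((n:ℝ)+1)
        - ((∑ k ∈ Icc 1 n, Real.sin (k*x)) + Real.sin (((n:ℝ)+1)*x))/((n:ℝ)+1)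
        = ((∑ k ∈ Icc (m+1) n, Real.sin (k*x)/k) - (∑ k ∈ Icc 1 n, Real.sin (k*x))/(n:ℝ))
          + (∑ k ∈ Icc 1 n, Real.sin (k*x)) * (1/(n:ℝ) - 1/((n:ℝ)+1)) by
      ring]
    have hc : (0:ℝ) ≤ 1/(n:ℝ) - 1/((n:ℝ)+1) := by
      rw [sub_nonneg]
      exact one_div_le_one_div_of_le hn0' (by linarith)
    calc |_ + _| ≤ |(∑ k ∈ Icc (m+1) n, Real.sin (k*x)/k)
            - (∑ k ∈ Icc 1 n, Real.sin (k*x))/(n:ℝ)|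
          + |(∑ k ∈ Icc 1 n, Real.sin (k*x)) * (1/(n:ℝ) - 1/((n:ℝ)+1))| := abs_add_le _ _
      _ ≤ (B/(m+1) + B*(1/(m+1) - 1/n)) + B * (1/(n:ℝ) - 1/((n:ℝ)+1)) := by
          refine add_le_add ih ?_
          rw [abs_mul, abs_of_nonneg hc]
          exact mul_le_mul_of_nonneg_right (hD n) hc
      _ = B/(m+1) + B*(1/(m+1) - 1/((n:ℝ)+1)) := by ring

lemma abel_tail {x B : ℝ} (hB : 0 ≤ B)
    (hD : ∀ N : ℕ, |∑ k ∈ Icc 1 N, Real.sin (k*x)| ≤ B)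
    (m : ℕ) (hm : 1 ≤ m) (n : ℕ) (hn : m + 1 ≤ n) :
    |∑ k ∈ Icc (m+1) n, Real.sin (k*x)/k| ≤ 2*B/(m+1) := by
  have h := abel_claim hB hD m hm n hn
  have hn0 : (0:ℝ) < (n:ℝ) := by
    have : (1:ℝ) ≤ (n:ℝ) := by exact_mod_cast by omega
    linarith
  have h2 : |(∑ k ∈ Icc 1 n, Real.sin (k*x))/(n:ℝ)| ≤ B/n := by
    rw [abs_div, abs_of_pos hn0]
    gcongr
    exact hD n
  have h3 := abs_sub_abs_le_abs_sub (∑ k ∈ Icc (m+1) n, Real.sin (k*x)/k)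
      ((∑ k ∈ Icc 1 n, Real.sin (k*x))/(n:ℝ))
  have hm1 : (0:ℝ) < (m:ℝ) + 1 := by positivity
  have : B/((m:ℝ)+1) + B*(1/((m:ℝ)+1) - 1/(n:ℝ)) + B/(n:ℝ) = 2*B/((m:ℝ)+1) := by ring
  calc |∑ k ∈ Icc (m+1) n, Real.sin (k*x)/k|
      ≤ |(∑ k ∈ Icc (m+1) n, Real.sin (k*x)/k)
          - (∑ k ∈ Icc 1 n, Real.sin (k*x))/(n:ℝ)|
        + |(∑ k ∈ Icc 1 n, Real.sin (k*x))/(n:ℝ)| := by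
        have := abs_sub_abs_le_abs_sub (∑ k ∈ Icc (m+1) n, Real.sin (k*x)/k)
          ((∑ k ∈ Icc 1 n, Real.sin (k*x))/(n:ℝ))
        linarith [abs_sub_abs_le_abs_sub (∑ k ∈ Icc (m+1) n, Real.sin (k*x)/k)
          ((∑ k ∈ Icc 1 n, Real.sin (k*x))/(n:ℝ))]
      _ ≤ _ := by
        rw [show 2*B/((m:ℝ)+1) = (B/((m:ℝ)+1) + B*(1/((m:ℝ)+1) - 1/(n:ℝ))) + B/(n:ℝ) by ring]
        push_cast at h ⊢
        exact add_le_add h h2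

lemma key_bound {x : ℝ} (hx : 0 < x) (hxpi : x ≤ π) (n : ℕ) :
    |∑ k ∈ Icc 1 n, Real.sin (k*x)/k| ≤ π + 2 := by
  have hpi := Real.pi_pos
  have hs : x / π ≤ Real.sin (x/2) := by
    simpa using Real.mul_le_sin (x := x/2) (by positivity) (by linarith)
  have hs0 : 0 < Real.sin (x/2) := lt_of_lt_of_le (by positivity) hs
  set m : ℕ := ⌊π / x⌋₊ with hmdef
  have hm1 : 1 ≤ m := Nat.le_floor (by rw [le_div_iff₀ hx]; push_cast; linarith)
  have hmx : (m:ℝ) * x ≤ π := by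
    have := Nat.floor_le (by positivity : (0:ℝ) ≤ π / x)
    calc (m:ℝ) * x ≤ (π / x) * x := by gcongr
      _ = π := by field_simp
  have hm1x : π < ((m:ℝ)+1) * x := by
    have := Nat.lt_floor_add_one (π / x)
    calc π = (π / x) * x := by field_simp
      _ < ((m:ℝ)+1) * x := by gcongr
  have hhead : ∀ N : ℕ, N ≤ m → |∑ k ∈ Icc 1 N, Real.sin (k*x)/k| ≤ π := by
    intro N hN
    calc |∑ k ∈ Icc 1 N, Real.sin (k*x)/k| ≤ ∑ k ∈ Icc 1 N, |Real.sin (k*x)/k| :=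
          Finset.abs_sum_le_sum_abs _ _
      _ ≤ ∑ _k ∈ Icc 1 N, x := by
          apply Finset.sum_le_sum
          intro k hk
          have hk1 : 1 ≤ k := (Finset.mem_Icc.mp hk).1
          have hk0 : (0:ℝ) < (k:ℝ) := by exact_mod_cast Nat.pos_of_ne_zero (by omega)
          rw [abs_div, abs_of_pos hk0, div_le_iff₀ hk0]
          calc |Real.sin (k*x)| ≤ |(k:ℝ)*x| := Real.abs_sin_le_abs
            _ = (k:ℝ)*x := abs_of_pos (by positivity)
            _ = x * k := by ring
      _ = (N:ℝ) * x := by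
          rw [Finset.sum_const, Nat.card_Icc]
          simp [mul_comm]
      _ ≤ (m:ℝ) * x := by
          have : (N:ℝ) ≤ (m:ℝ) := by exact_mod_cast hN
          exact mul_le_mul_of_nonneg_right this hx.le
      _ ≤ π := hmx
  rcases le_or_gt n m with h | h
  · linarith [hhead n h]
  · have hsplit : (∑ k ∈ Icc 1 m, Real.sin (k*x)/k)
        + (∑ k ∈ Icc (m+1) n, Real.sin (k*x)/k) = ∑ k ∈ Icc 1 n, Real.sin (k*x)/k := by
      rw [show Icc 1 m = Ioc 0 m from by rw [← Finset.Icc_add_one_left_eq_Ioc]; rfl,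
        show Icc (m+1) n = Ioc m n from by rw [← Finset.Icc_add_one_left_eq_Ioc],
        show Icc 1 n = Ioc 0 n from by rw [← Finset.Icc_add_one_left_eq_Ioc]; rfl]
      exact Finset.sum_Ioc_consecutive _ (Nat.zero_le m) (le_of_lt h)
    have hB0 : (0:ℝ) ≤ 1 / Real.sin (x/2) := by positivity
    have htail := abel_tail hB0 (dirichlet_bound hs0) m hm1 n h
    have htail2 : 2*(1 / Real.sin (x/2))/((m:ℝ)+1) ≤ 2 := by
      rw [div_le_iff₀ (by positivity : (0:ℝ) < (m:ℝ)+1)]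
      have hkey : 1 ≤ Real.sin (x/2) * ((m:ℝ)+1) := by
        have h1 : (x/π) * ((m:ℝ)+1) ≤ Real.sin (x/2) * ((m:ℝ)+1) := by
          gcongr
        have h2 : (1:ℝ) < (x/π) * ((m:ℝ)+1) := by
          rw [div_mul_eq_mul_div, lt_div_iff₀ hpi, one_mul, mul_comm]
          exact hm1x
        linarith
      have hone : Real.sin (x/2) * (1 / Real.sin (x/2)) = 1 := mul_one_div_cancel hs0.ne'
      nlinarith [hone, hkey, hs0]
    rw [← hsplit]
    calc |_ + _| ≤ |∑ k ∈ Icc 1 m, Real.sin (k*x)/k|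
          + |∑ k ∈ Icc (m+1) n, Real.sin (k*x)/k| := abs_add_le _ _
      _ ≤ π + 2 := add_le_add (hhead m le_rfl) (le_trans htail htail2)

lemma all_x_bound (n : ℕ) (x : ℝ) :
    |∑ k ∈ Icc 1 n, Real.sin (k*x)/k| ≤ π + 2 := by
  have hpi := Real.pi_pos
  set j : ℤ := ⌊x / (2*π)⌋ with hj
  set y : ℝ := x - j * (2*π) with hy
  have h2pi : (0:ℝ) < 2*π := by positivity
  have hy0 : 0 ≤ y := by
    have h1 : ((j:ℝ)) ≤ x / (2*π) := Int.floor_le _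
    have h2 : (j:ℝ) * (2*π) ≤ (x/(2*π)) * (2*π) :=
      mul_le_mul_of_nonneg_right h1 h2pi.le
    rw [div_mul_cancel₀ x h2pi.ne'] at h2
    rw [hy]; linarith
  have hy2 : y < 2*π := by
    have h1 : x / (2*π) < (j:ℝ) + 1 := Int.lt_floor_add_one _
    have h2 : (x/(2*π)) * (2*π) < ((j:ℝ)+1) * (2*π) :=
      mul_lt_mul_of_pos_right h1 h2pi
    rw [div_mul_cancel₀ x h2pi.ne'] at h2
    rw [hy]; linarith
  have hsum : ∑ k ∈ Icc 1 n, Real.sin (k*x)/k = ∑ k ∈ Icc 1 n, Real.sin (k*y)/k := by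
    apply Finset.sum_congr rfl
    intro k _
    congr 1
    have : (k:ℝ) * x = (k:ℝ) * y + ((k:ℤ) * j : ℤ) * (2*π) := by
      rw [hy]; push_cast; ring
    rw [this, Real.sin_add_int_mul_two_pi]
  rw [hsum]
  rcases eq_or_lt_of_le hy0 with h0 | h0
  · simp [← h0]
    positivity
  rcases le_or_gt y π with hle | hgt
  · exact key_bound h0 hle n
  · set z : ℝ := 2*π - y with hz
    have hz0 : 0 < z := by rw [hz]; linarith
    have hzpi : z ≤ π := by rw [hz]; linarith
    have hneg : ∑ k ∈ Icc 1 n, Real.sin (k*y)/k = -∑ k ∈ Icc 1 n, Real.sin (k*z)/k := by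
      rw [← Finset.sum_neg_distrib]
      apply Finset.sum_congr rfl
      intro k _
      have : (k:ℝ) * y = -((k:ℝ) * z) + ((k:ℤ) : ℤ) * (2*π) := by
        rw [hz]; push_cast; ring
      rw [this, Real.sin_add_int_mul_two_pi, Real.sin_neg]
      ring
    rw [hneg, abs_neg]
    exact key_bound hz0 hzpi n

theorem stmt0 (n : ℕ) (hn : 1 ≤ n) (x : ℝ) :
    |∑ k ∈ Finset.Icc 1 n, Real.sin (k * x) / k| ≤ 3 * Real.sqrt π := by
  have h := all_x_bound n x
  have hsq : (1.77:ℝ) ≤ Real.sqrt π := by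
    rw [Real.le_sqrt (by norm_num) Real.pi_pos.le]
    nlinarith [Real.pi_gt_d6]
  have hpi := Real.pi_lt_d2
  calc |∑ k ∈ Finset.Icc 1 n, Real.sin (k * x) / k| ≤ π + 2 := h
    _ ≤ 3 * 1.77 := by linarith
    _ ≤ 3 * Real.sqrt π := by linarith
end

section
/- The L^1 norm of the Dirichlet kernel satisfies the lower bound ‖D_n‖_{L^1(−π,π)} = ∫_{−π}^{π} |sin((2n+1)x/2)/(2 sin(x/2))| dx ≥ (1/π) log n for all n ≥ 2. -/
open scoped Real
open MeasureTheory Finset Filter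

/-- Dirichlet kernel. -/
noncomputable def Dk (k : ℕ) (x : ℝ) : ℝ :=
  Real.sin ((2 * k + 1) * x / 2) / (2 * Real.sin (x / 2))

/-- Modified conjugate kernel (depends on the fixed parameter `n`). -/
noncomputable def Dstar (n k : ℕ) (x : ℝ) : ℝ :=
  if |x| ≤ 1 / n then
    (Real.cos (x / 2) - Real.cos ((2 * k + 1) * x / 2)) / (2 * Real.sin (x / 2))
  else -Real.cos ((2 * k + 1) * x / 2) / (2 * Real.sin (x / 2))

/-- The complex kernel `E_k = D_k + i D_k^*`. -/
noncomputable def Ek (n k : ℕ) (x : ℝ) : ℂ := (Dk k x : ℂ) + Complex.I * (Dstar n k x : ℂ)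

/- ------------------ auxiliary lemmas ------------------ -/

lemma aux_abs_sin_le (x : ℝ) : |Real.sin x| ≤ |x| := by
  rcases eq_or_ne x 0 with h | h
  · simp [h]
  · exact (Real.abs_sin_lt_abs h).le

lemma aux_abs_sin_nat_mul_le (m : ℕ) (y : ℝ) :
    |Real.sin (m * y)| ≤ m * |Real.sin y| := by
  induction m with
  | zero => simp
  | succ m ih =>
    have h1 : ((m + 1 : ℕ) : ℝ) * y = m * y + y := by push_cast; ring
    rw [h1, Real.sin_add]
    have h2 : |Real.sin (m * y) * Real.cos y + Real.cos (m * y) * Real.sin y| ≤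
        |Real.sin (m * y)| * |Real.cos y| + |Real.cos (m * y)| * |Real.sin y| := by
      calc _ ≤ |Real.sin (m * y) * Real.cos y| + |Real.cos (m * y) * Real.sin y| := abs_add_le _ _
        _ = _ := by rw [abs_mul, abs_mul]
    have h3 := Real.abs_cos_le_one y
    have h4 := Real.abs_cos_le_one (m * y)
    have h5 := abs_nonneg (Real.sin (m * y))
    have h6 := abs_nonneg (Real.sin y)
    push_cast
    nlinarith

lemma aux_Dk_abs_le (k : ℕ) (x : ℝ) : |Dk k x| ≤ 2 * k + 1 := by
  unfold Dk
  rcases eq_or_ne (Real.sin (x / 2)) 0 with h | h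
  · simp only [h, mul_zero, div_zero, abs_zero]
    positivity
  · have hnum : |Real.sin ((2 * k + 1) * x / 2)| ≤ (2 * k + 1) * |Real.sin (x / 2)| := by
      have : (2 * (k : ℝ) + 1) * x / 2 = ((2 * k + 1 : ℕ) : ℝ) * (x / 2) := by
        push_cast; ring
      rw [this]
      have := aux_abs_sin_nat_mul_le (2 * k + 1) (x / 2)
      push_cast at this ⊢
      linarith
    rw [abs_div, abs_mul, abs_two]
    rw [div_le_iff₀ (by positivity)]
    have h6 := abs_nonneg (Real.sin (x / 2))
    nlinarith [hnum]

lemma aux_Dk_measurable (k : ℕ) : Measurable fun x => |Dk k x| := by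
  have h1 : Measurable fun x : ℝ => Real.sin ((2 * k + 1) * x / 2) := by
    fun_prop
  have h2 : Measurable fun x : ℝ => 2 * Real.sin (x / 2) := by fun_prop
  exact (h1.div h2).abs

lemma aux_Dk_intervalIntegrable (k : ℕ) (a b : ℝ) :
    IntervalIntegrable (fun x => |Dk k x|) volume a b := by
  rw [intervalIntegrable_iff]
  apply Integrable.mono' (g := fun _ => (2 * (k : ℝ) + 1))
  · exact integrableOn_const measure_Ioc_lt_top.ne
  · exact (aux_Dk_measurable k).aestronglyMeasurable
  · filter_upwards with x
    rw [Real.norm_eq_abs, abs_abs]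
    exact aux_Dk_abs_le k x

lemma aux_h_intervalIntegrable (n : ℕ) (a b : ℝ) :
    IntervalIntegrable (fun x => Real.sin ((2 * n + 1) * x / 2) ^ 2 / x) volume a b := by
  rw [intervalIntegrable_iff]
  apply Integrable.mono' (g := fun _ => (2 * (n : ℝ) + 1))
  · exact integrableOn_const measure_Ioc_lt_top.ne
  · exact (((Real.measurable_sin.comp (by fun_prop)).pow_const 2).div measurable_id).aestronglyMeasurable
  · filter_upwards with x
    rw [Real.norm_eq_abs]
    rcases eq_or_ne x 0 with hx | hx
    · simp [hx]; positivity
    · rw [abs_div]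
      rw [div_le_iff₀ (abs_pos.2 hx)]
      have h1 : |Real.sin ((2 * n + 1) * x / 2) ^ 2| = |Real.sin ((2 * n + 1) * x / 2)| ^ 2 := by
        rw [sq_abs, _root_.abs_of_nonneg (sq_nonneg _)]
      rw [h1]
      have h2 : |Real.sin ((2 * n + 1) * x / 2)| ≤ (2 * n + 1) * (|x| / 2) := by
        have heq : (2 * (n : ℝ) + 1) * x / 2 = ((2 * n + 1 : ℕ) : ℝ) * (x / 2) := by
          push_cast; ring
        calc |Real.sin ((2 * (n : ℝ) + 1) * x / 2)|
            ≤ ((2 * n + 1 : ℕ) : ℝ) * |Real.sin (x / 2)| := by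
              rw [heq]; exact aux_abs_sin_nat_mul_le _ _
          _ ≤ (2 * n + 1) * (|x| / 2) := by
              push_cast
              have := aux_abs_sin_le (x / 2)
              rw [abs_div, abs_two] at this
              gcongr
      have h3 := Real.abs_sin_le_one ((2 * n + 1) * x / 2)
      have h4 := abs_nonneg (Real.sin ((2 * n + 1) * x / 2))
      nlinarith

lemma aux_harmonic (n : ℕ) :
    Real.log (n + 1) ≤ ∑ k ∈ Finset.range n, (1 : ℝ) / (2 * (k + 1)) * 2 := by
  have htel := Finset.sum_range_sub (fun k => Real.log ((k : ℝ) + 1)) n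
  simp only [Nat.cast_zero, zero_add, Real.log_one, sub_zero] at htel
  rw [← htel]
  apply Finset.sum_le_sum
  intro k _
  have hk1 : (0 : ℝ) < (k : ℝ) + 1 := by positivity
  have h := Real.log_le_sub_one_of_pos (x := ((k : ℝ) + 1 + 1) / ((k : ℝ) + 1)) (by positivity)
  rw [Real.log_div (by positivity) (by positivity)] at h
  have e : ((k : ℝ) + 1 + 1) / ((k : ℝ) + 1) - 1 = 1 / ((k : ℝ) + 1) := by field_simp; ring
  rw [e] at h
  have e2 : (1 : ℝ) / (2 * ((k : ℝ) + 1)) * 2 = 1 / ((k : ℝ) + 1) := by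
    field_simp
  push_cast
  rw [e2]
  linarith

theorem stmt6 (n : ℕ) (hn : 2 ≤ n) :
    (1 / π) * Real.log n ≤ ∫ x in (-π)..π, |Dk n x| := by
  have hpi := Real.pi_pos
  set M : ℝ := 2 * n + 1 with hM
  have hMpos : (0 : ℝ) < M := by positivity
  set f : ℕ → ℝ := fun k => 2 * k * π / M with hf
  set h : ℝ → ℝ := fun x => Real.sin ((2 * n + 1) * x / 2) ^ 2 / x with hh
  have hf0 : f 0 = 0 := by simp [hf]
  have hfmono : ∀ j k : ℕ, j ≤ k → f j ≤ f k := by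
    intro j k hjk
    have hjk' : (j : ℝ) ≤ k := by exact_mod_cast hjk
    show 2 * (j : ℝ) * π / M ≤ 2 * (k : ℝ) * π / M
    gcongr
  have hfpos : ∀ k : ℕ, 1 ≤ k → 0 < f k := by
    intro k hk
    have : (1 : ℝ) ≤ (k : ℝ) := by exact_mod_cast hk
    apply div_pos (by nlinarith) hMpos
  have hfn_le : f n ≤ π := by
    rw [hf, div_le_iff₀ hMpos, hM]
    push_cast
    nlinarith
  -- step: per-interval integral of sin² equals π/M
  have hsin2 : ∀ k : ℕ, ∫ x in f k..f (k + 1), Real.sin ((2 * n + 1) * x / 2) ^ 2 = π / M := by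
    intro k
    have hcomp : ∀ x : ℝ, (2 * (n : ℝ) + 1) * x / 2 = (M / 2) * x := by
      intro x; rw [hM]; ring
    have : (fun x : ℝ => Real.sin ((2 * n + 1) * x / 2) ^ 2) =
        fun x => (fun t => Real.sin t ^ 2) ((M / 2) * x) := by
      funext x; rw [hcomp]
    rw [this, intervalIntegral.integral_comp_mul_left (fun t => Real.sin t ^ 2)
      (by positivity : M / 2 ≠ 0)]
    have hk : M / 2 * f k = k * π := by
      rw [hf]; field_simp
    have hk1 : M / 2 * f (k + 1) = (k + 1) * π := by
      rw [hf]; field_simp; push_cast; ring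
    rw [hk, hk1, integral_sin_sq]
    rw [Real.sin_nat_mul_pi]
    have : ((k : ℝ) + 1) * π = ((k + 1 : ℕ) : ℝ) * π := by push_cast; ring
    rw [this, Real.sin_nat_mul_pi]
    rw [hM]
    push_cast
    field_simp [show (2 * (n : ℝ) + 1) ≠ 0 by positivity]
    ring
    have h2n : (1 + (n : ℝ) * 2) ≠ 0 := by positivity
    rw [show (n : ℝ) * π * (1 + (n : ℝ) * 2)⁻¹ * 2 + π * (1 + (n : ℝ) * 2)⁻¹ = π * ((1 + (n : ℝ) * 2) * (1 + (n : ℝ) * 2)⁻¹) by ring, mul_inv_cancel₀ h2n, mul_one]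
  -- per-interval lower bound
  have hinterval : ∀ k : ℕ, (1 : ℝ) / (2 * (k + 1)) ≤ ∫ x in f k..f (k + 1), h x := by
    intro k
    have hfk1 : 0 < f (k + 1) := hfpos (k + 1) (Nat.le_add_left 1 k)
    have hlow : ∫ x in f k..f (k + 1),
        (Real.sin ((2 * n + 1) * x / 2) ^ 2 / f (k + 1)) ≤ ∫ x in f k..f (k + 1), h x := by
      apply intervalIntegral.integral_mono_on (hfmono k (k + 1) (Nat.le_succ k))
      · exact (IntervalIntegrable.div_const (by
          apply Continuous.intervalIntegrable; fun_prop) _)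
      · exact aux_h_intervalIntegrable n _ _
      · intro x hx
        rcases eq_or_lt_of_le (hx.1.trans' ((hfmono 0 k (Nat.zero_le k)).trans_eq' hf0)) with hx0 | hx0
        · rw [hh, ← hx0]
          simp
        · rw [hh]
          exact div_le_div_of_nonneg_left (sq_nonneg _) hx0 hx.2 |>.trans_eq rfl
    calc (1 : ℝ) / (2 * (k + 1))
        = (π / M) / f (k + 1) := by
          rw [hf, hM]
          field_simp
          exact Nat.cast_succ k
      _ = ∫ x in f k..f (k + 1), (Real.sin ((2 * n + 1) * x / 2) ^ 2 / f (k + 1)) := by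
          rw [intervalIntegral.integral_div, hsin2 k]
      _ ≤ _ := hlow
  -- sum over intervals
  have hsum : ∫ x in (0 : ℝ)..f n, h x =
      ∑ k ∈ Finset.range n, ∫ x in f k..f (k + 1), h x := by
    rw [← hf0]
    exact (intervalIntegral.sum_integral_adjacent_intervals
      (fun k _ => aux_h_intervalIntegrable n _ _)).symm
  have hlog : (1 : ℝ) / 2 * Real.log n ≤ ∫ x in (0 : ℝ)..f n, h x := by
    rw [hsum]
    have h1 : ∑ k ∈ Finset.range n, (1 : ℝ) / (2 * (k + 1)) ≤
        ∑ k ∈ Finset.range n, ∫ x in f k..f (k + 1), h x :=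
      Finset.sum_le_sum fun k _ => hinterval k
    have h2 := aux_harmonic n
    have h3 : Real.log (n : ℝ) ≤ Real.log ((n : ℝ) + 1) := by
      apply Real.log_le_log (by positivity)
      linarith
    have h4 : ∑ k ∈ Finset.range n, (1 : ℝ) / (2 * (k + 1)) * 2 =
        2 * ∑ k ∈ Finset.range n, (1 : ℝ) / (2 * (k + 1)) := by
      rw [Finset.mul_sum]
      exact Finset.sum_congr rfl fun k _ => by ring
    rw [h4] at h2
    linarith
  -- extend to [0, π]
  have hext : ∫ x in (0 : ℝ)..f n, h x ≤ ∫ x in (0 : ℝ)..π, h x := by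
    have hsplit : (∫ x in (0 : ℝ)..f n, h x) + ∫ x in f n..π, h x = ∫ x in (0 : ℝ)..π, h x :=
      intervalIntegral.integral_add_adjacent_intervals
        (aux_h_intervalIntegrable n _ _) (aux_h_intervalIntegrable n _ _)
    have hnn : 0 ≤ ∫ x in f n..π, h x := by
      apply intervalIntegral.integral_nonneg hfn_le
      intro x hx
      have hx0 : 0 < x := lt_of_lt_of_le (hfpos n (by omega)) hx.1
      rw [hh]
      positivity
    linarith
  -- compare h with |Dk n|
  have hcomp : ∫ x in (0 : ℝ)..π, h x ≤ ∫ x in (0 : ℝ)..π, |Dk n x| := by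
    apply intervalIntegral.integral_mono_on hpi.le
      (aux_h_intervalIntegrable n _ _) (aux_Dk_intervalIntegrable n _ _)
    intro x hx
    rcases eq_or_lt_of_le hx.1 with hx0 | hx0
    · rw [← hx0]
      simp only [hh, mul_zero, zero_div, Real.sin_zero, ne_eq, OfNat.ofNat_ne_zero,
        not_false_eq_true, zero_pow, div_zero]
      exact abs_nonneg _
    · have hs : 0 < Real.sin (x / 2) := by
        apply Real.sin_pos_of_pos_of_lt_pi (by linarith)
        linarith [hx.2]
      have hsx : 2 * Real.sin (x / 2) ≤ x := by
        have := Real.sin_le (x := x / 2) (by linarith)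
        linarith
      have hDk : |Dk n x| = |Real.sin ((2 * n + 1) * x / 2)| / (2 * Real.sin (x / 2)) := by
        unfold Dk
        rw [abs_div, _root_.abs_of_pos (by linarith : (0:ℝ) < 2 * Real.sin (x / 2))]
      rw [hDk]
      show Real.sin ((2 * n + 1) * x / 2) ^ 2 / x ≤ _
      have hstep1 : Real.sin ((2 * n + 1) * x / 2) ^ 2 / x ≤
          |Real.sin ((2 * n + 1) * x / 2)| / x := by
        gcongr
        rw [← sq_abs]
        nlinarith [Real.abs_sin_le_one ((2 * n + 1) * x / 2),
          abs_nonneg (Real.sin ((2 * n + 1) * x / 2))]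
      have hstep2 : |Real.sin ((2 * n + 1) * x / 2)| / x ≤
          |Real.sin ((2 * n + 1) * x / 2)| / (2 * Real.sin (x / 2)) := by
        apply div_le_div_of_nonneg_left (abs_nonneg _) (by linarith) hsx
      linarith
  -- drop the negative part
  have hneg : 0 ≤ ∫ x in (-π)..(0:ℝ), |Dk n x| :=
    intervalIntegral.integral_nonneg (by linarith) (fun x _ => abs_nonneg _)
  have hsplit2 : (∫ x in (-π)..(0:ℝ), |Dk n x|) + ∫ x in (0:ℝ)..π, |Dk n x| =
      ∫ x in (-π)..π, |Dk n x| :=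
    intervalIntegral.integral_add_adjacent_intervals
      (aux_Dk_intervalIntegrable n _ _) (aux_Dk_intervalIntegrable n _ _)
  -- final comparison
  have hlogn : 0 ≤ Real.log n := by
    apply Real.log_nonneg
    have : (2 : ℝ) ≤ n := by exact_mod_cast hn
    linarith
  have hfinal : (1 / π) * Real.log n ≤ (1 / 2) * Real.log n := by
    apply mul_le_mul_of_nonneg_right ?_ hlogn
    rw [div_le_div_iff₀ hpi two_pos]
    linarith [Real.two_le_pi]
  calc (1 / π) * Real.log n ≤ 1 / 2 * Real.log n := hfinal
    _ ≤ ∫ x in (0:ℝ)..f n, h x := hlog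
    _ ≤ ∫ x in (0:ℝ)..π, h x := hext
    _ ≤ ∫ x in (0:ℝ)..π, |Dk n x| := hcomp
    _ ≤ ∫ x in (-π)..π, |Dk n x| := by linarith
end

section
/- Let {c_n}_{n≥0} be a sequence of complex numbers in a sector K(θ₁) (θ₁ ∈ [0, π/2)) belonging to MVBVS with parameter λ ≥ 2, i.e. ∑_{k=m}^{2m} |c_{k+1} − c_k| ≤ (C/m) ∑_{k=[m/λ]}^{[λm]} |c_k| for all m ≥ 1. Then for any fixed 1 < μ < 2, ∑_{k=n}^{[μn]} |c_{k+1} − c_k| log k = O( max_{[n/λ] ≤ k ≤ [λn]} |c_k| log k ) as n → ∞, with implicit constant depending only on the sequence and λ. -/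
open scoped Real
open MeasureTheory Finset Filter

set_option maxHeartbeats 1000000 in
theorem stmt7 (c : ℕ → ℂ) (θ : ℝ) (hθ0 : 0 ≤ θ) (hθ1 : θ < π / 2)
    (hsec : ∀ n, |(c n).arg| ≤ θ)
    (lam : ℝ) (hlam : 2 ≤ lam) (C : ℝ) (hC : 0 < C)
    (hmv : ∀ m : ℕ, 1 ≤ m →
      ∑ k ∈ Finset.Icc m (2 * m), ‖c (k + 1) - c k‖ ≤
        C / m * ∑ k ∈ Finset.Icc ⌊(m : ℝ) / lam⌋₊ ⌊lam * m⌋₊, ‖c k‖)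
    (μ : ℝ) (hμ1 : 1 < μ) (hμ2 : μ < 2) :
    ∃ C' : ℝ, 0 < C' ∧ ∃ N : ℕ, ∀ n : ℕ, N ≤ n → ∀ B : ℝ,
      (∀ k ∈ Finset.Icc ⌊(n : ℝ) / lam⌋₊ ⌊lam * n⌋₊,
        ‖c k‖ * Real.log k ≤ B) →
      ∑ k ∈ Finset.Icc n ⌊μ * n⌋₊, ‖c (k + 1) - c k‖ * Real.log k ≤
        C' * B := by
  have hlam0 : (0:ℝ) < lam := by linarith
  refine ⟨4 * C * lam, by nlinarith, ⌈8 * lam ^ 2⌉₊ + 1, ?_⟩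
  intro n hn B hB
  have hn1 : 1 ≤ n := by omega
  have hn8 : 8 * lam ^ 2 ≤ (n : ℝ) := by
    have h1 : (⌈8 * lam ^ 2⌉₊ : ℝ) ≤ (n : ℝ) := by
      exact_mod_cast Nat.cast_le.mpr (by omega : ⌈8 * lam ^ 2⌉₊ ≤ n)
    linarith [Nat.le_ceil (8 * lam ^ 2)]
  have hnR : (32:ℝ) ≤ (n : ℝ) := by nlinarith
  set L : ℝ := Real.log (2 * (n : ℝ)) with hLdef
  have hL : 0 < L := Real.log_pos (by linarith)
  -- every k in the index range is at least n/(2λ)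
  have hkge : ∀ k ∈ Finset.Icc ⌊(n : ℝ) / lam⌋₊ ⌊lam * n⌋₊, (n : ℝ) / (2 * lam) ≤ (k : ℝ) := by
    intro k hk
    obtain ⟨hk1, _⟩ := Finset.mem_Icc.mp hk
    have h1 : (n : ℝ) / lam - 1 < (⌊(n : ℝ) / lam⌋₊ : ℝ) :=
      Nat.sub_one_lt_floor _
    have h2 : ((⌊(n : ℝ) / lam⌋₊ : ℕ) : ℝ) ≤ (k : ℝ) := Nat.cast_le.mpr hk1
    have h3 : (n : ℝ) / lam - (n : ℝ) / (2 * lam) = (n : ℝ) / (2 * lam) := by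
      field_simp; ring
    have h4 : (1:ℝ) ≤ (n : ℝ) / (2 * lam) := by
      rw [le_div_iff₀ (by positivity)]; nlinarith
    linarith
  -- log k is at least L/2 on the range
  have hlogk : ∀ k ∈ Finset.Icc ⌊(n : ℝ) / lam⌋₊ ⌊lam * n⌋₊, L / 2 ≤ Real.log k := by
    intro k hk
    have hk8 : (8:ℝ) ≤ (n : ℝ) / (2 * lam) := by
      rw [le_div_iff₀ (by positivity)]; nlinarith
    have hkR := hkge k hk
    have l1 : Real.log ((n : ℝ) / (2 * lam)) ≤ Real.log k :=
      Real.log_le_log (by linarith) (by linarith)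
    have hsq : 2 * (n : ℝ) ≤ ((n : ℝ) / (2 * lam)) ^ 2 := by
      rw [div_pow, le_div_iff₀ (by positivity)]
      nlinarith
    have l2 : L ≤ 2 * Real.log ((n : ℝ) / (2 * lam)) := by
      have := Real.log_le_log (by linarith : (0:ℝ) < 2 * n) hsq
      rw [Real.log_pow] at this
      push_cast at this
      linarith
    linarith
  -- B is nonnegative
  have hBne : ⌊(n : ℝ) / lam⌋₊ ≤ ⌊lam * n⌋₊ := by
    apply Nat.floor_le_floor
    rw [div_le_iff₀ hlam0]
    nlinarith [mul_nonneg (Nat.cast_nonneg (α := ℝ) n) (by nlinarith : (0:ℝ) ≤ lam * lam - 1)]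
  have hk0mem : ⌊lam * n⌋₊ ∈ Finset.Icc ⌊(n : ℝ) / lam⌋₊ ⌊lam * n⌋₊ :=
    Finset.mem_Icc.mpr ⟨hBne, le_rfl⟩
  have hB0 : 0 ≤ B := by
    have h1 := hB _ hk0mem
    have h2 := hlogk _ hk0mem
    nlinarith [norm_nonneg (c ⌊lam * n⌋₊)]
  -- bound each |c k| by 2B/L
  have hc : ∀ k ∈ Finset.Icc ⌊(n : ℝ) / lam⌋₊ ⌊lam * n⌋₊,
      ‖c k‖ ≤ 2 * B / L := by
    intro k hk
    have h1 := hB k hk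
    have h2 := hlogk k hk
    rw [le_div_iff₀ hL]
    nlinarith [norm_nonneg (c k)]
  -- bound the sum of |c k|
  have hcard : ((Finset.Icc ⌊(n : ℝ) / lam⌋₊ ⌊lam * n⌋₊).card : ℝ) ≤ 2 * lam * n := by
    rw [Nat.card_Icc]
    have h1 : (⌊lam * n⌋₊ : ℝ) ≤ lam * n := Nat.floor_le (by positivity)
    have h2 : ((⌊lam * n⌋₊ + 1 - ⌊(n : ℝ) / lam⌋₊ : ℕ) : ℝ) ≤ (⌊lam * n⌋₊ : ℝ) + 1 := by
      push_cast [Nat.cast_sub (by omega : ⌊(n : ℝ) / lam⌋₊ ≤ ⌊lam * n⌋₊ + 1)]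
      have : (0:ℝ) ≤ (⌊(n : ℝ) / lam⌋₊ : ℝ) := Nat.cast_nonneg _
      linarith
    have h3 : (1:ℝ) ≤ lam * n := by nlinarith
    linarith
  have hsumc : ∑ k ∈ Finset.Icc ⌊(n : ℝ) / lam⌋₊ ⌊lam * n⌋₊, ‖c k‖ ≤
      2 * lam * n * (2 * B / L) := by
    calc ∑ k ∈ Finset.Icc ⌊(n : ℝ) / lam⌋₊ ⌊lam * n⌋₊, ‖c k‖
        ≤ ∑ _k ∈ Finset.Icc ⌊(n : ℝ) / lam⌋₊ ⌊lam * n⌋₊, (2 * B / L) :=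
          Finset.sum_le_sum hc
      _ = ((Finset.Icc ⌊(n : ℝ) / lam⌋₊ ⌊lam * n⌋₊).card : ℝ) * (2 * B / L) := by
          rw [Finset.sum_const, nsmul_eq_mul]
      _ ≤ 2 * lam * n * (2 * B / L) := by
          apply mul_le_mul_of_nonneg_right hcard (by positivity)
  -- apply the MVBVS condition
  have hmvn := hmv n hn1
  have hT : ∑ k ∈ Finset.Icc n (2 * n), ‖c (k + 1) - c k‖ ≤
      4 * C * lam * B / L := by
    have hnpos : (0:ℝ) < (n : ℝ) := by linarith
    calc ∑ k ∈ Finset.Icc n (2 * n), ‖c (k + 1) - c k‖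
        ≤ C / n * ∑ k ∈ Finset.Icc ⌊(n : ℝ) / lam⌋₊ ⌊lam * n⌋₊, ‖c k‖ := hmvn
      _ ≤ C / n * (2 * lam * n * (2 * B / L)) := by
          apply mul_le_mul_of_nonneg_left hsumc (by positivity)
      _ = 4 * C * lam * B / L := by field_simp; ring
  -- final estimate
  have hμsub : Finset.Icc n ⌊μ * n⌋₊ ⊆ Finset.Icc n (2 * n) := by
    have h1 : (⌊μ * (n : ℝ)⌋₊ : ℝ) ≤ μ * n := Nat.floor_le (by nlinarith)
    have h2 : ⌊μ * (n : ℝ)⌋₊ ≤ 2 * n := by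
      have h4 : (⌊μ * (n : ℝ)⌋₊ : ℝ) ≤ ((2 * n : ℕ) : ℝ) := by push_cast; nlinarith
      exact_mod_cast h4
    exact Finset.Icc_subset_Icc le_rfl h2
  have hlogle : ∀ k ∈ Finset.Icc n ⌊μ * n⌋₊, Real.log k ≤ L := by
    intro k hk
    obtain ⟨hk1, hk2⟩ := Finset.mem_Icc.mp hk
    have : k ≤ 2 * n := by
      have := hμsub hk
      exact (Finset.mem_Icc.mp this).2
    rcases Nat.eq_zero_or_pos k with h | h
    · simp [h]; linarith
    · apply Real.log_le_log (by exact_mod_cast h)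
      exact_mod_cast Nat.cast_le.mpr this
  calc ∑ k ∈ Finset.Icc n ⌊μ * n⌋₊, ‖c (k + 1) - c k‖ * Real.log k
      ≤ ∑ k ∈ Finset.Icc n ⌊μ * n⌋₊, ‖c (k + 1) - c k‖ * L := by
        apply Finset.sum_le_sum
        intro k hk
        exact mul_le_mul_of_nonneg_left (hlogle k hk) (norm_nonneg _)
    _ = (∑ k ∈ Finset.Icc n ⌊μ * n⌋₊, ‖c (k + 1) - c k‖) * L := by
        rw [Finset.sum_mul]
    _ ≤ (∑ k ∈ Finset.Icc n (2 * n), ‖c (k + 1) - c k‖) * L := by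
        apply mul_le_mul_of_nonneg_right _ hL.le
        exact Finset.sum_le_sum_of_subset_of_nonneg hμsub
          (fun k _ _ => norm_nonneg _)
    _ ≤ (4 * C * lam * B / L) * L :=
        mul_le_mul_of_nonneg_right hT hL.le
    _ = 4 * C * lam * B := by field_simp
end
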